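/- For every natural number n, Σ_{k=0}^{b(n)} a(k) = b(n)² + b(n) + n + 1, where a and b enumerate the odious and evil numbers in increasing order. -/

import Mathlib

/-- Sum of base-`d` digits of `n`. -/
def sdig (d n : ℕ) : ℕ := (Nat.digits d n).sum

/-- `t_d(n)`: base-`d` digit sum of `n`, reduced mod `d`. -/
def td (d n : ℕ) : ℕ := sdig d n % d

/-- `a_{j,d}(n)`: n-th natural (0-indexed, increasing) with base-`d` digit sum ≡ j mod d. -/
noncomputable def agen (d j n : ℕ) : ℕ := Nat.nth (fun k => sdig d k % d = j) n

/-- n-th odious number (binary digit sum odd), 0-indexed increasing. -/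
noncomputable def odious (n : ℕ) : ℕ := Nat.nth (fun k => (Nat.digits 2 k).sum % 2 = 1) n

/-- n-th evil number (binary digit sum even), 0-indexed increasing. -/
noncomputable def evil (n : ℕ) : ℕ := Nat.nth (fun k => (Nat.digits 2 k).sum % 2 = 0) n

/-- Thue–Morse sequence: parity of the binary digit sum. -/
def tm (n : ℕ) : ℕ := (Nat.digits 2 n).sum % 2

lemma tm_lt_two (n : ℕ) : tm n < 2 := Nat.mod_lt _ (by norm_num)

lemma tm_two_mul (k : ℕ) : tm (2 * k) = tm k := by
  rcases Nat.eq_zero_or_pos k with rfl | hk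
  · rfl
  · unfold tm
    rw [Nat.digits_def' (by norm_num : 1 < 2) (by omega : 0 < 2 * k)]
    simp [Nat.mul_div_cancel_left _ (by norm_num : 0 < 2), Nat.mul_mod_right]

lemma tm_two_mul_add_one (k : ℕ) : tm (2 * k + 1) = (tm k + 1) % 2 := by
  unfold tm
  rw [Nat.digits_def' (by norm_num : 1 < 2) (by omega : 0 < 2 * k + 1)]
  have h1 : (2 * k + 1) % 2 = 1 := by omega
  have h2 : (2 * k + 1) / 2 = k := by omega
  rw [h1, h2]
  simp [Nat.add_mod, Nat.add_comm]

abbrev P : ℕ → Prop := fun k => (Nat.digits 2 k).sum % 2 = 1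
abbrev Q : ℕ → Prop := fun k => (Nat.digits 2 k).sum % 2 = 0

lemma P_iff (k : ℕ) : P k ↔ tm k = 1 := Iff.rfl
lemma Q_iff (k : ℕ) : Q k ↔ tm k = 0 := Iff.rfl

lemma count_P_two_mul (k : ℕ) : Nat.count P (2 * k) = k := by
  induction k with
  | zero => simp
  | succ k ih =>
    have e : 2 * (k + 1) = (2 * k + 1) + 1 := by ring
    rw [e, Nat.count_succ, Nat.count_succ, ih]
    have h1 : tm (2 * k) = tm k := tm_two_mul k
    have h2 : tm (2 * k + 1) = (tm k + 1) % 2 := tm_two_mul_add_one k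
    have h3 := tm_lt_two k
    simp only [P_iff, h1, h2]
    interval_cases h : tm k <;> simp

lemma odious_add_tm (k : ℕ) : odious k + tm k = 2 * k + 1 := by
  have h3 := tm_lt_two k
  show Nat.nth P k + tm k = 2 * k + 1
  interval_cases h : tm k
  · have hp : P (2 * k + 1) := by
      rw [P_iff, tm_two_mul_add_one, h]
    have hc : Nat.count P (2 * k + 1) = k := by
      have hnp : ¬ P (2 * k) := by
        intro hc
        have h1 : tm (2 * k) = 1 := hc
        rw [tm_two_mul, h] at h1
        exact absurd h1 (by norm_num)
      rw [Nat.count_succ, count_P_two_mul, if_neg hnp]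
      omega
    have hh := Nat.nth_count hp
    rw [hc] at hh
    omega
  · have hp : P (2 * k) := by rw [P_iff, tm_two_mul, h]
    have hc : Nat.count P (2 * k) = k := count_P_two_mul k
    have hh := Nat.nth_count hp
    rw [hc] at hh
    omega

lemma count_PQ (N : ℕ) : Nat.count P N + Nat.count Q N = N := by
  induction N with
  | zero => simp
  | succ N ih =>
    rw [Nat.count_succ, Nat.count_succ]
    have := tm_lt_two N
    simp only [P_iff, Q_iff]
    interval_cases h : tm N <;> simp <;> omega

lemma Q_infinite : (setOf Q).Infinite := by
  apply Set.infinite_of_not_bddAbove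
  rintro ⟨B, hB⟩
  have h3 := tm_lt_two (B + 1)
  interval_cases h : tm (B + 1)
  · have : 2 * (B + 1) ∈ setOf Q := by
      exact (Q_iff _).2 (by simp [tm_two_mul, h])
    have := hB this; omega
  · have : 2 * (B + 1) + 1 ∈ setOf Q := by
      exact (Q_iff _).2 (by simp [tm_two_mul_add_one, h])
    have := hB this; omega

lemma sum_tm (N : ℕ) : ∑ k ∈ Finset.range N, tm k = Nat.count P N := by
  induction N with
  | zero => simp
  | succ N ih =>
    rw [Finset.sum_range_succ, Nat.count_succ, ih]
    have := tm_lt_two N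
    simp only [P_iff]
    interval_cases h : tm N <;> simp

theorem stmt11 (n : ℕ) :
    ∑ k ∈ Finset.range (evil n + 1), odious k = (evil n) ^ 2 + evil n + n + 1 := by
  set m := evil n with hm
  have key : ∑ k ∈ Finset.range (m + 1), (odious k + tm k) = (m + 1) ^ 2 := by
    have : ∀ k, odious k + tm k = 2 * k + 1 := odious_add_tm
    simp only [this]
    induction m with
    | zero => simp
    | succ m ih => rw [Finset.sum_range_succ, ih]; ring
  rw [Finset.sum_add_distrib, sum_tm] at key
  have hQm : Nat.count Q (m + 1) = n + 1 := by
    rw [hm]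
    exact Nat.count_nth_succ_of_infinite Q_infinite n
  have := count_PQ (m + 1)
  rw [hQm] at this
  have goal2 : Nat.count P (m + 1) = m - n ∧ n ≤ m := by omega
  nlinarith [key, goal2.1, goal2.2, Nat.sub_add_cancel goal2.2]
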